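/- Let X be a nonempty finite type, let D_0, D_1 be distributions on X, let γ ∈ (0, 1/10) and k ≥ 1. Set D_X := (1/2)(D_0 + D_1), let g be the associated posterior function, and suppose h : X → [0,1] is γ-calibrated for g under D_X. Set p := E_{D_X}[h] (so 0 < p < 1), D̃_1(z) := h(z)·D_X(z)/p, D̃_0(z) := (1−h(z))·D_X(z)/(1−p), and define h' : X^k → {0,1} by h'(z_1,…,z_k) = 1 if ∏_{i=1}^k h(z_i) > ∏_{i=1}^k (1−h(z_i)) and h' = 0 otherwise. Then |E_{D_1^⊗k}[h'] − E_{D_0^⊗k}[h']| ≥ d_TV(D̃_0^⊗k, D̃_1^⊗k) − 14·k·γ. -/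

import Mathlib

/-- Expectation of `f` under the (finitely supported) distribution `D`. -/
noncomputable def expect {X : Type*} [Fintype X] (D f : X → ℝ) : ℝ := ∑ x, D x * f x

/-- `D` is a probability distribution on the finite type `X`. -/
def IsDist {X : Type*} [Fintype X] (D : X → ℝ) : Prop := (∀ x, 0 ≤ D x) ∧ ∑ x, D x = 1

/-- Total variation distance between two distributions on a finite type. -/
noncomputable def dTV {X : Type*} [Fintype X] (P Q : X → ℝ) : ℝ := (∑ x, |P x - Q x|) / 2

/-- `k`-fold product distribution on `Fin k → X`. -/
noncomputable def prodDist {X : Type*} (k : ℕ) (P : X → ℝ) : (Fin k → X) → ℝ :=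
  fun z => ∏ i, P (z i)

lemma my_sum_cons {X : Type*} [Fintype X] {n : ℕ} (F : (Fin (n+1) → X) → ℝ) :
    ∑ z : Fin (n+1) → X, F z = ∑ x : X, ∑ t : Fin n → X, F (Fin.cons x t) := by
  rw [← Equiv.sum_comp (Fin.consEquiv (fun _ : Fin (n+1) => X)) F, Fintype.sum_prod_type]
  rfl

lemma my_sum_prod {X : Type*} [Fintype X] (P : X → ℝ) (h1 : ∑ x, P x = 1) :
    ∀ n : ℕ, ∑ z : Fin n → X, ∏ i, P (z i) = 1
  | 0 => by simp
  | (n+1) => by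
    rw [my_sum_cons (fun z => ∏ i, P (z i))]
    simp only [Fin.prod_univ_succ, Fin.cons_zero, Fin.cons_succ]
    simp only [← Finset.mul_sum, my_sum_prod P h1 n, mul_one, h1]

lemma my_ratio (γ q : ℝ) (k : ℕ) (hγ0 : 0 ≤ γ) (hq : 1/2 ≤ q) (hqγ : q ≤ 1/2 + γ)
    (hq1 : q < 1) : 1 - ((1-q)/q)^k ≤ 4 * k * γ := by
  have hq0 : (0:ℝ) < q := by linarith
  have hr : 1 - 4*γ ≤ (1-q)/q := by
    rw [le_div_iff₀ hq0]; nlinarith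
  have h2 : (-2:ℝ) ≤ (1-q)/q - 1 := by
    have : (0:ℝ) ≤ (1-q)/q := div_nonneg (by linarith) (by linarith)
    linarith
  have hpow := one_add_mul_le_pow h2 k
  have he : (1 + ((1-q)/q - 1)) = (1-q)/q := by ring
  rw [he] at hpow
  have hmul : (k:ℝ) * (-(4*γ)) ≤ (k:ℝ) * ((1-q)/q - 1) :=
    mul_le_mul_of_nonneg_left (by linarith) (Nat.cast_nonneg k)
  nlinarith

lemma my_pointA (γ q H H' C : ℝ) (k : ℕ) (hγ0 : 0 ≤ γ) (hq : 1/2 ≤ q) (hqγ : q ≤ 1/2 + γ)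
    (hq1 : q < 1) (hH : 0 ≤ H) (hH' : 0 ≤ H') (hC : 0 ≤ C) (hHH : H' ≤ H) :
    H'*C/(1-q)^k - H*C/q^k ≤ 4*k*γ * (H'*C/(1-q)^k) := by
  have hq0 : (0:ℝ) < q := by linarith
  have h1q : (0:ℝ) < 1 - q := by linarith
  have hqk : (0:ℝ) < q^k := pow_pos hq0 k
  have h1qk : (0:ℝ) < (1-q)^k := pow_pos h1q k
  have hA : 0 ≤ H'*C/(1-q)^k := by positivity
  have step1 : H'*C/q^k ≤ H*C/q^k := by gcongr
  have key : H'*C/q^k = (H'*C/(1-q)^k) * ((1-q)/q)^k := by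
    rw [div_pow]
    field_simp
  have hrk := my_ratio γ q k hγ0 hq hqγ hq1
  have hprod : (0:ℝ) ≤ (H'*C/(1-q)^k) * (4*(k:ℝ)*γ - (1 - ((1-q)/q)^k)) :=
    mul_nonneg hA (by linarith)
  nlinarith [step1, key]

lemma my_pointB (q H H' C : ℝ) (k : ℕ) (hq : 1/2 ≤ q) (hq1 : q < 1)
    (hH : 0 ≤ H) (hH' : 0 ≤ H') (hC : 0 ≤ C) (hHH : H ≤ H') :
    H*C/q^k ≤ H'*C/(1-q)^k := by
  have h1q : (0:ℝ) < 1 - q := by linarith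
  have hqk : (0:ℝ) < q^k := pow_pos (by linarith) k
  have h1qk : (0:ℝ) < (1-q)^k := pow_pos h1q k
  have hle : (1-q)^k ≤ q^k := pow_le_pow_left₀ (by linarith) (by linarith) k
  have hHC : (0:ℝ) ≤ H*C := mul_nonneg hH hC
  calc H*C/q^k ≤ H*C/(1-q)^k := by gcongr
    _ ≤ H'*C/(1-q)^k := by gcongr


lemma my_hybrid {X : Type*} [Fintype X] (h P Q : X → ℝ) (c : ℝ)
    (hP0 : ∀ x, 0 ≤ P x) (hP1 : ∑ x, P x = 1)
    (hQ0 : ∀ x, 0 ≤ Q x) (hQ1 : ∑ x, Q x = 1)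
    (key : ∀ w : ℝ → ℝ, (∀ t, w t ∈ Set.Icc (0:ℝ) 1) →
      |∑ x, (P x - Q x) * w (h x)| ≤ c) :
    ∀ (n : ℕ) (a b : ℝ),
      |(∑ z : Fin n → X, (∏ i, P (z i)) *
          (if a * ∏ i, h (z i) > b * ∏ i, (1 - h (z i)) then (1:ℝ) else 0)) -
        ∑ z : Fin n → X, (∏ i, Q (z i)) *
          (if a * ∏ i, h (z i) > b * ∏ i, (1 - h (z i)) then (1:ℝ) else 0)| ≤ n * c
  | 0, a, b => by simp
  | (n+1), a, b => by
    classical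
    -- weight functions
    set wP : ℝ → ℝ := fun s => ∑ t : Fin n → X, (∏ i, P (t i)) *
        (if (a * s) * ∏ i, h (t i) > (b * (1 - s)) * ∏ i, (1 - h (t i)) then (1:ℝ) else 0)
      with hwP
    set wQ : ℝ → ℝ := fun s => ∑ t : Fin n → X, (∏ i, Q (t i)) *
        (if (a * s) * ∏ i, h (t i) > (b * (1 - s)) * ∏ i, (1 - h (t i)) then (1:ℝ) else 0)
      with hwQ
    have hbound : ∀ (R : X → ℝ), (∀ x, 0 ≤ R x) → (∑ x, R x = 1) →
        ∀ s : ℝ, (∑ t : Fin n → X, (∏ i, R (t i)) *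
          (if (a * s) * ∏ i, h (t i) > (b * (1 - s)) * ∏ i, (1 - h (t i)) then (1:ℝ) else 0))
          ∈ Set.Icc (0:ℝ) 1 := by
      intro R hR0 hR1 s
      constructor
      · apply Finset.sum_nonneg
        intro t _
        have : (0:ℝ) ≤ ∏ i, R (t i) := Finset.prod_nonneg (fun i _ => hR0 (t i))
        split <;> simp [this]
      · calc (∑ t : Fin n → X, (∏ i, R (t i)) *
            (if (a * s) * ∏ i, h (t i) > (b * (1 - s)) * ∏ i, (1 - h (t i)) then (1:ℝ) else 0))
            ≤ ∑ t : Fin n → X, ∏ i, R (t i) := by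
              apply Finset.sum_le_sum
              intro t _
              have h0 : (0:ℝ) ≤ ∏ i, R (t i) := Finset.prod_nonneg (fun i _ => hR0 (t i))
              split <;> simp [h0]
          _ = 1 := my_sum_prod R hR1 n
    have hdecomp : ∀ (R : X → ℝ),
        (∑ z : Fin (n+1) → X, (∏ i, R (z i)) *
          (if a * ∏ i, h (z i) > b * ∏ i, (1 - h (z i)) then (1:ℝ) else 0))
        = ∑ x : X, R x * ∑ t : Fin n → X, (∏ i, R (t i)) *
          (if (a * h x) * ∏ i, h (t i) > (b * (1 - h x)) * ∏ i, (1 - h (t i)) then (1:ℝ) else 0) := by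
      intro R
      rw [my_sum_cons]
      apply Finset.sum_congr rfl
      intro x _
      rw [Finset.mul_sum]
      apply Finset.sum_congr rfl
      intro t _
      simp only [Fin.prod_univ_succ, Fin.cons_zero, Fin.cons_succ]
      have e1 : a * (h x * ∏ i, h (t i)) = (a * h x) * ∏ i, h (t i) := by ring
      have e2 : b * ((1 - h x) * ∏ i, (1 - h (t i))) = (b * (1 - h x)) * ∏ i, (1 - h (t i)) := by
        ring
      have e : (if a * (h x * ∏ i, h (t i)) > b * ((1 - h x) * ∏ i, (1 - h (t i)))
            then (1:ℝ) else 0)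
          = (if (a * h x) * ∏ i, h (t i) > (b * (1 - h x)) * ∏ i, (1 - h (t i))
            then (1:ℝ) else 0) := by rw [e1, e2]
      rw [e]
      ring
    rw [hdecomp P, hdecomp Q]
    have hsplit : (∑ x : X, P x * wP (h x)) - (∑ x : X, Q x * wQ (h x))
        = (∑ x : X, (P x - Q x) * wP (h x)) + ∑ x : X, Q x * (wP (h x) - wQ (h x)) := by
      rw [← Finset.sum_add_distrib, ← Finset.sum_sub_distrib]
      apply Finset.sum_congr rfl
      intro x _
      ring
    rw [hsplit]
    have b1 : |∑ x : X, (P x - Q x) * wP (h x)| ≤ c :=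
      key wP (fun s => hbound P hP0 hP1 s)
    have b2 : |∑ x : X, Q x * (wP (h x) - wQ (h x))| ≤ n * c := by
      calc |∑ x : X, Q x * (wP (h x) - wQ (h x))|
          ≤ ∑ x : X, |Q x * (wP (h x) - wQ (h x))| := Finset.abs_sum_le_sum_abs _ _
        _ ≤ ∑ x : X, Q x * (n * c) := by
            apply Finset.sum_le_sum
            intro x _
            rw [abs_mul, abs_of_nonneg (hQ0 x)]
            exact mul_le_mul_of_nonneg_left
              (my_hybrid h P Q c hP0 hP1 hQ0 hQ1 key n (a * h x) (b * (1 - h x))) (hQ0 x)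
        _ = n * c := by rw [← Finset.sum_mul, hQ1, one_mul]
    calc |(∑ x : X, (P x - Q x) * wP (h x)) + ∑ x : X, Q x * (wP (h x) - wQ (h x))|
        ≤ |∑ x : X, (P x - Q x) * wP (h x)| + |∑ x : X, Q x * (wP (h x) - wQ (h x))| :=
          abs_add_le _ _
      _ ≤ c + n * c := add_le_add b1 b2
      _ = (n+1 : ℕ) * c := by push_cast; ring


theorem stmt_1 {X : Type*} [Fintype X] [Nonempty X]
    (D0 D1 : X → ℝ) (hD0 : IsDist D0) (hD1 : IsDist D1)
    (γ : ℝ) (hγ : γ ∈ Set.Ioo (0:ℝ) (1/10))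
    (k : ℕ) (hk : 1 ≤ k)
    (DX : X → ℝ) (hDX : DX = fun x => (D0 x + D1 x) / 2)
    (g : X → ℝ)
    (hg : g = fun x => if 0 < D0 x + D1 x then D1 x / (D0 x + D1 x) else 0)
    (h : X → ℝ) (hh : ∀ x, h x ∈ Set.Icc (0:ℝ) 1)
    (hcal : ∀ w : ℝ → ℝ, (∀ t, w t ∈ Set.Icc (0:ℝ) 1) →
      |expect DX (fun x => w (h x) * (g x - h x))| ≤ γ)
    (p : ℝ) (hp : p = expect DX h)
    (Dt0 Dt1 : X → ℝ)
    (hDt0 : Dt0 = fun z => (1 - h z) * DX z / (1 - p))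
    (hDt1 : Dt1 = fun z => h z * DX z / p)
    (h' : (Fin k → X) → ℝ)
    (hh' : h' = fun z => if (∏ i, h (z i)) > ∏ i, (1 - h (z i)) then 1 else 0) :
    0 < p ∧ p < 1 ∧
    |expect (prodDist k D1) h' - expect (prodDist k D0) h'| ≥
      dTV (prodDist k Dt0) (prodDist k Dt1) - 14 * k * γ := by
  classical
  obtain ⟨hγ0, hγ10⟩ := hγ
  obtain ⟨hD0n, hD0s⟩ := hD0
  obtain ⟨hD1n, hD1s⟩ := hD1
  have hDXn : ∀ x, 0 ≤ DX x := by
    intro x; rw [hDX]; dsimp only; linarith [hD0n x, hD1n x]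
  have hDXs : ∑ x, DX x = 1 := by
    rw [hDX]; dsimp only
    rw [← Finset.sum_div, Finset.sum_add_distrib, hD0s, hD1s]; norm_num
  have hgD1 : ∀ x, DX x * g x = D1 x / 2 := by
    intro x; rw [hDX, hg]; dsimp only
    by_cases hx : 0 < D0 x + D1 x
    · rw [if_pos hx]; field_simp
    · rw [if_neg hx]
      have h0 : D1 x = 0 := by
        have := not_lt.1 hx
        linarith [hD0n x, hD1n x]
      rw [h0]; ring
  have hEg : ∑ x, DX x * g x = 1/2 := by
    simp only [hgD1]
    rw [← Finset.sum_div, hD1s]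
  have hhx0 : ∀ x, 0 ≤ h x := fun x => (hh x).1
  have hhx1 : ∀ x, h x ≤ 1 := fun x => (hh x).2
  have hEh : ∑ x, DX x * h x = p := by rw [hp]; rfl
  have hpγ : |p - 1/2| ≤ γ := by
    have hc := hcal (fun _ => 1) (fun t => by constructor <;> norm_num)
    unfold expect at hc
    simp only [one_mul] at hc
    have hsub : ∑ x, DX x * (g x - h x) = (∑ x, DX x * g x) - ∑ x, DX x * h x := by
      rw [← Finset.sum_sub_distrib]
      exact Finset.sum_congr rfl (fun x _ => by ring)
    rw [hsub, hEg, hEh] at hc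
    rw [abs_sub_comm] at hc
    exact hc
  have hpabs := abs_le.1 hpγ
  have hp0 : 0 < p := by linarith [hpabs.1]
  have hp1 : p < 1 := by linarith [hpabs.2]
  refine ⟨hp0, hp1, ?_⟩
  have h1p0 : 0 < 1 - p := by linarith
  -- Dt0, Dt1 are distributions
  have hDt1n : ∀ x, 0 ≤ Dt1 x := by
    intro x; rw [hDt1]
    exact div_nonneg (mul_nonneg (hhx0 x) (hDXn x)) hp0.le
  have hDt1s : ∑ x, Dt1 x = 1 := by
    rw [hDt1]; dsimp only
    rw [← Finset.sum_div]
    have e : ∑ x, h x * DX x = p := by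
      rw [← hEh]; exact Finset.sum_congr rfl (fun x _ => by ring)
    rw [e, div_self hp0.ne']
  have hDt0n : ∀ x, 0 ≤ Dt0 x := by
    intro x; rw [hDt0]
    exact div_nonneg (mul_nonneg (by linarith [hhx1 x]) (hDXn x)) h1p0.le
  have hDt0s : ∑ x, Dt0 x = 1 := by
    rw [hDt0]; dsimp only
    rw [← Finset.sum_div]
    have e : ∑ x, (1 - h x) * DX x = 1 - p := by
      have : ∑ x, (1 - h x) * DX x = (∑ x, DX x) - ∑ x, DX x * h x := by
        rw [← Finset.sum_sub_distrib]
        exact Finset.sum_congr rfl (fun x _ => by ring)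
      rw [this, hDXs, hEh]
    rw [e, div_self h1p0.ne']
  have h2p : |2*p - 1| ≤ 2*γ := by
    have e : 2*p - 1 = 2*(p - 1/2) := by ring
    rw [e, abs_mul, abs_two]
    linarith [hpγ]
  -- key calibration-style bounds
  have key1 : ∀ w : ℝ → ℝ, (∀ t, w t ∈ Set.Icc (0:ℝ) 1) →
      |∑ x, (D1 x - Dt1 x) * w (h x)| ≤ 4*γ := by
    intro w hw
    have hsplit : ∑ x, (D1 x - Dt1 x) * w (h x)
        = 2 * (∑ x, DX x * (w (h x) * (g x - h x)))
          + (2 - 1/p) * ∑ x, (DX x * h x) * w (h x) := by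
      rw [Finset.mul_sum, Finset.mul_sum, ← Finset.sum_add_distrib]
      apply Finset.sum_congr rfl
      intro x _
      have e1 : D1 x = 2 * (DX x * g x) := by rw [hgD1 x]; ring
      rw [e1, hDt1]; dsimp only
      field_simp
      ring
    have hcalw := hcal w hw
    unfold expect at hcalw
    have hS0 : 0 ≤ ∑ x, (DX x * h x) * w (h x) :=
      Finset.sum_nonneg (fun x _ =>
        mul_nonneg (mul_nonneg (hDXn x) (hhx0 x)) (hw (h x)).1)
    have hSp : ∑ x, (DX x * h x) * w (h x) ≤ p := by
      rw [← hEh]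
      apply Finset.sum_le_sum
      intro x _
      exact mul_le_of_le_one_right (mul_nonneg (hDXn x) (hhx0 x)) (hw (h x)).2
    rw [hsplit]
    have habs2 : |(2 - 1/p) * ∑ x, (DX x * h x) * w (h x)| ≤ 2*γ := by
      rw [abs_mul]
      have e : |2 - 1/p| = |2*p - 1| / p := by
        have e2 : 2 - 1/p = (2*p-1)/p := by field_simp
        rw [e2, abs_div, abs_of_pos hp0]
      rw [e, abs_of_nonneg hS0]
      calc |2*p-1|/p * ∑ x, (DX x * h x) * w (h x)
          ≤ |2*p-1|/p * p := by
            exact mul_le_mul_of_nonneg_left hSp (div_nonneg (abs_nonneg _) hp0.le)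
        _ = |2*p-1| := div_mul_cancel₀ _ hp0.ne'
        _ ≤ 2*γ := h2p
    calc |2 * (∑ x, DX x * (w (h x) * (g x - h x)))
          + (2 - 1/p) * ∑ x, (DX x * h x) * w (h x)|
        ≤ |2 * (∑ x, DX x * (w (h x) * (g x - h x)))|
          + |(2 - 1/p) * ∑ x, (DX x * h x) * w (h x)| := abs_add_le _ _
      _ ≤ 4*γ := by
          rw [abs_mul, abs_two]
          linarith [hcalw, habs2]
  have key0 : ∀ w : ℝ → ℝ, (∀ t, w t ∈ Set.Icc (0:ℝ) 1) →
      |∑ x, (D0 x - Dt0 x) * w (h x)| ≤ 4*γ := by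
    intro w hw
    have hsplit : ∑ x, (D0 x - Dt0 x) * w (h x)
        = (-2) * (∑ x, DX x * (w (h x) * (g x - h x)))
          + (2 - 1/(1-p)) * ∑ x, (DX x * (1 - h x)) * w (h x) := by
      rw [Finset.mul_sum, Finset.mul_sum, ← Finset.sum_add_distrib]
      apply Finset.sum_congr rfl
      intro x _
      have e1 : D0 x = 2 * DX x - 2 * (DX x * g x) := by
        rw [hgD1 x, hDX]; dsimp only; ring
      rw [e1, hDt0]; dsimp only
      field_simp
      ring
    have hcalw := hcal w hw
    unfold expect at hcalw
    have hS0 : 0 ≤ ∑ x, (DX x * (1 - h x)) * w (h x) :=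
      Finset.sum_nonneg (fun x _ =>
        mul_nonneg (mul_nonneg (hDXn x) (by linarith [hhx1 x])) (hw (h x)).1)
    have hSp : ∑ x, (DX x * (1 - h x)) * w (h x) ≤ 1 - p := by
      have e : ∑ x, DX x * (1 - h x) = 1 - p := by
        have : ∑ x, DX x * (1 - h x) = (∑ x, DX x) - ∑ x, DX x * h x := by
          rw [← Finset.sum_sub_distrib]
          exact Finset.sum_congr rfl (fun x _ => by ring)
        rw [this, hDXs, hEh]
      rw [← e]
      apply Finset.sum_le_sum
      intro x _
      exact mul_le_of_le_one_right (mul_nonneg (hDXn x) (by linarith [hhx1 x])) (hw (h x)).2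
    rw [hsplit]
    have habs2 : |(2 - 1/(1-p)) * ∑ x, (DX x * (1 - h x)) * w (h x)| ≤ 2*γ := by
      rw [abs_mul]
      have e : |2 - 1/(1-p)| = |2*p - 1| / (1-p) := by
        have e2 : 2 - 1/(1-p) = (1 - 2*p)/(1-p) := by field_simp; ring
        rw [e2, abs_div, abs_of_pos h1p0, abs_sub_comm]
      rw [e, abs_of_nonneg hS0]
      calc |2*p-1|/(1-p) * ∑ x, (DX x * (1 - h x)) * w (h x)
          ≤ |2*p-1|/(1-p) * (1-p) := by
            exact mul_le_mul_of_nonneg_left hSp (div_nonneg (abs_nonneg _) h1p0.le)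
        _ = |2*p-1| := div_mul_cancel₀ _ h1p0.ne'
        _ ≤ 2*γ := h2p
    calc |(-2) * (∑ x, DX x * (w (h x) * (g x - h x)))
          + (2 - 1/(1-p)) * ∑ x, (DX x * (1 - h x)) * w (h x)|
        ≤ |(-2) * (∑ x, DX x * (w (h x) * (g x - h x)))|
          + |(2 - 1/(1-p)) * ∑ x, (DX x * (1 - h x)) * w (h x)| := abs_add_le _ _
      _ ≤ 4*γ := by
          rw [abs_mul]
          have : |(-2 : ℝ)| = 2 := by norm_num
          rw [this]
          linarith [hcalw, habs2]
  -- hybrid applications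
  have hyb1 := my_hybrid h D1 Dt1 (4*γ) hD1n hD1s hDt1n hDt1s key1 k 1 1
  have hyb0 := my_hybrid h D0 Dt0 (4*γ) hD0n hD0s hDt0n hDt0s key0 k 1 1
  simp only [one_mul] at hyb1 hyb0
  have hE : ∀ R : X → ℝ, expect (prodDist k R) h'
      = ∑ z : Fin k → X, (∏ i, R (z i)) *
        (if (∏ i, h (z i)) > ∏ i, (1 - h (z i)) then (1:ℝ) else 0) := by
    intro R
    simp only [expect, prodDist, hh']
  have hAz : ∀ z : Fin k → X, (∏ i, Dt0 (z i))
      = (∏ i, (1 - h (z i))) * (∏ i, DX (z i)) / (1-p)^k := by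
    intro z
    rw [hDt0]; dsimp only
    rw [Finset.prod_div_distrib, Finset.prod_mul_distrib, Finset.prod_const,
      Finset.card_univ, Fintype.card_fin]
  have hBz : ∀ z : Fin k → X, (∏ i, Dt1 (z i))
      = (∏ i, h (z i)) * (∏ i, DX (z i)) / p^k := by
    intro z
    rw [hDt1]; dsimp only
    rw [Finset.prod_div_distrib, Finset.prod_mul_distrib, Finset.prod_const,
      Finset.card_univ, Fintype.card_fin]
  have hAs : ∑ z : Fin k → X, ∏ i, Dt0 (z i) = 1 := my_sum_prod Dt0 hDt0s k
  have hBs : ∑ z : Fin k → X, ∏ i, Dt1 (z i) = 1 := my_sum_prod Dt1 hDt1s k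
  have hdtv : dTV (prodDist k Dt0) (prodDist k Dt1)
      = ∑ z : Fin k → X, max ((∏ i, Dt1 (z i)) - ∏ i, Dt0 (z i)) 0 := by
    unfold dTV prodDist
    have e : ∀ z : Fin k → X, |(∏ i, Dt0 (z i)) - ∏ i, Dt1 (z i)|
        = 2 * max ((∏ i, Dt1 (z i)) - ∏ i, Dt0 (z i)) 0
          - ((∏ i, Dt1 (z i)) - ∏ i, Dt0 (z i)) := by
      intro z
      rcases le_total (∏ i, Dt1 (z i)) (∏ i, Dt0 (z i)) with hle | hle
      · rw [max_eq_right (by linarith), abs_of_nonneg (by linarith)]; ring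
      · rw [max_eq_left (by linarith), abs_of_nonpos (by linarith)]; ring
    simp only [e]
    rw [Finset.sum_sub_distrib, ← Finset.mul_sum, Finset.sum_sub_distrib, hBs, hAs]
    ring
  have hkγ : (0:ℝ) ≤ 4 * (k:ℝ) * γ := by positivity
  have hstepB : ∑ z : Fin k → X, max ((∏ i, Dt1 (z i)) - ∏ i, Dt0 (z i)) 0
      ≤ ((∑ z : Fin k → X, (∏ i, Dt1 (z i)) *
          (if (∏ i, h (z i)) > ∏ i, (1 - h (z i)) then (1:ℝ) else 0))
        - ∑ z : Fin k → X, (∏ i, Dt0 (z i)) *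
          (if (∏ i, h (z i)) > ∏ i, (1 - h (z i)) then (1:ℝ) else 0))
        + 4 * (k:ℝ) * γ := by
    have hsplit2 : ∑ z : Fin k → X, ((∏ i, Dt1 (z i)) - ∏ i, Dt0 (z i)) *
          (if (∏ i, h (z i)) > ∏ i, (1 - h (z i)) then (1:ℝ) else 0)
        = (∑ z : Fin k → X, (∏ i, Dt1 (z i)) *
            (if (∏ i, h (z i)) > ∏ i, (1 - h (z i)) then (1:ℝ) else 0))
          - ∑ z : Fin k → X, (∏ i, Dt0 (z i)) *
            (if (∏ i, h (z i)) > ∏ i, (1 - h (z i)) then (1:ℝ) else 0) := by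
      rw [← Finset.sum_sub_distrib]
      exact Finset.sum_congr rfl (fun z _ => by ring)
    rcases le_total (1/2:ℝ) p with hph | hph
    · -- case p ≥ 1/2
      have hpt : ∀ z : Fin k → X,
          max ((∏ i, Dt1 (z i)) - ∏ i, Dt0 (z i)) 0
          - ((∏ i, Dt1 (z i)) - ∏ i, Dt0 (z i)) *
            (if (∏ i, h (z i)) > ∏ i, (1 - h (z i)) then (1:ℝ) else 0)
          ≤ (4*(k:ℝ)*γ) * ∏ i, Dt0 (z i) := by
        intro z
        have hH : 0 ≤ ∏ i, h (z i) := Finset.prod_nonneg (fun i _ => hhx0 _)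
        have hH' : 0 ≤ ∏ i, (1 - h (z i)) :=
          Finset.prod_nonneg (fun i _ => by linarith [hhx1 (z i)])
        have hC : 0 ≤ ∏ i, DX (z i) := Finset.prod_nonneg (fun i _ => hDXn _)
        have hM0 : 0 ≤ (4*(k:ℝ)*γ) *
            ((∏ i, (1 - h (z i))) * (∏ i, DX (z i)) / (1-p)^k) :=
          mul_nonneg hkγ (div_nonneg (mul_nonneg hH' hC) (pow_nonneg h1p0.le k))
        rw [hAz z, hBz z]
        by_cases hcnd : (∏ i, h (z i)) > ∏ i, (1 - h (z i))
        · rw [if_pos hcnd, mul_one]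
          have h1 := my_pointA γ p (∏ i, h (z i)) (∏ i, (1 - h (z i)))
            (∏ i, DX (z i)) k hγ0.le hph (by linarith [hpabs.2]) hp1 hH hH' hC hcnd.le
          rcases max_cases ((∏ i, h (z i)) * (∏ i, DX (z i)) / p^k
              - (∏ i, (1 - h (z i))) * (∏ i, DX (z i)) / (1-p)^k) 0 with
            ⟨he, hc2⟩ | ⟨he, hc2⟩ <;> rw [he] <;> linarith
        · rw [if_neg hcnd, mul_zero, sub_zero]
          have h1 := my_pointB p (∏ i, h (z i)) (∏ i, (1 - h (z i)))
            (∏ i, DX (z i)) k hph hp1 hH hH' hC (not_lt.1 hcnd)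
          apply max_le <;> linarith
      have hsum := Finset.sum_le_sum (fun z (_ : z ∈ Finset.univ) => hpt z)
      rw [Finset.sum_sub_distrib, ← Finset.mul_sum, hAs, mul_one, hsplit2] at hsum
      linarith
    · -- case p ≤ 1/2
      have hpt : ∀ z : Fin k → X,
          max ((∏ i, Dt1 (z i)) - ∏ i, Dt0 (z i)) 0
          - ((∏ i, Dt1 (z i)) - ∏ i, Dt0 (z i)) *
            (if (∏ i, h (z i)) > ∏ i, (1 - h (z i)) then (1:ℝ) else 0)
          ≤ (4*(k:ℝ)*γ) * ∏ i, Dt1 (z i) := by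
        intro z
        have hH : 0 ≤ ∏ i, h (z i) := Finset.prod_nonneg (fun i _ => hhx0 _)
        have hH' : 0 ≤ ∏ i, (1 - h (z i)) :=
          Finset.prod_nonneg (fun i _ => by linarith [hhx1 (z i)])
        have hC : 0 ≤ ∏ i, DX (z i) := Finset.prod_nonneg (fun i _ => hDXn _)
        have hM0 : 0 ≤ (4*(k:ℝ)*γ) *
            ((∏ i, h (z i)) * (∏ i, DX (z i)) / p^k) :=
          mul_nonneg hkγ (div_nonneg (mul_nonneg hH hC) (pow_nonneg hp0.le k))
        rw [hAz z, hBz z]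
        have hq2 : (1:ℝ)/2 ≤ 1 - p := by linarith
        have hq1 : (1:ℝ) - p < 1 := by linarith
        have hep : (1:ℝ) - (1 - p) = p := by ring
        by_cases hcnd : (∏ i, h (z i)) > ∏ i, (1 - h (z i))
        · rw [if_pos hcnd, mul_one]
          have h1 := my_pointB (1-p) (∏ i, (1 - h (z i))) (∏ i, h (z i))
            (∏ i, DX (z i)) k hq2 hq1 hH' hH hC hcnd.le
          rw [hep] at h1
          rcases max_cases ((∏ i, h (z i)) * (∏ i, DX (z i)) / p^k
              - (∏ i, (1 - h (z i))) * (∏ i, DX (z i)) / (1-p)^k) 0 with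
            ⟨he, hc2⟩ | ⟨he, hc2⟩ <;> rw [he] <;> linarith
        · rw [if_neg hcnd, mul_zero, sub_zero]
          have h1 := my_pointA γ (1-p) (∏ i, (1 - h (z i))) (∏ i, h (z i))
            (∏ i, DX (z i)) k hγ0.le hq2 (by linarith [hpabs.1]) hq1 hH' hH hC
            (not_lt.1 hcnd)
          rw [hep] at h1
          apply max_le <;> linarith
      have hsum := Finset.sum_le_sum (fun z (_ : z ∈ Finset.univ) => hpt z)
      rw [Finset.sum_sub_distrib, ← Finset.mul_sum, hBs, mul_one, hsplit2] at hsum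
      linarith
  rw [hE D1, hE D0, hdtv]
  have hub := le_abs_self
    ((∑ z : Fin k → X, (∏ i, D1 (z i)) *
        (if (∏ i, h (z i)) > ∏ i, (1 - h (z i)) then (1:ℝ) else 0))
      - ∑ z : Fin k → X, (∏ i, D0 (z i)) *
        (if (∏ i, h (z i)) > ∏ i, (1 - h (z i)) then (1:ℝ) else 0))
  have hkγ' : (0:ℝ) ≤ (k:ℝ) * γ := by positivity
  have h1 := abs_le.1 hyb1
  have h0 := abs_le.1 hyb0
  linarith [h1.1, h1.2, h0.1, h0.2, hstepB, hub]
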